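/- Let V be a finite ground set, f : Finset V → ℝ a nonnegative submodular function, c ∈ [0,1], and p ∈ [0,1]^V. Let S be a random subset of V (given by any probability distribution μ on Finset V) such that for every element e ∈ V, the probability that e ∈ S equals c·p_e. Then E[f(S)] ≥ c·f⁻(p), where f⁻ is the Lovász extension of f. -/

import Mathlib

open MeasureTheory

/-- The Lovász extension of a set function `f`:
`f⁻(x) = ∫₀¹ f({e : x_e ≥ θ}) dθ`. -/
noncomputable def lovaszExt {V : Type*} [Fintype V] (f : Finset V → ℝ) (x : V → ℝ) : ℝ :=
  ∫ θ in (0:ℝ)..1, f (Finset.univ.filter (fun e => θ ≤ x e))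

lemma downward_mem_iff_lt_card {n : ℕ} (P : ℕ → Prop) [DecidablePred P]
    (hdc : ∀ i j, i ≤ j → j < n → P j → P i) {i : ℕ} (hi : i < n) :
    P i ↔ i < ((Finset.range n).filter P).card := by
  constructor
  · intro hPi
    have hsub : Finset.range (i+1) ⊆ (Finset.range n).filter P := by
      intro j hj
      simp only [Finset.mem_range] at hj
      have hji : j ≤ i := Nat.lt_succ_iff.mp hj
      exact Finset.mem_filter.mpr ⟨Finset.mem_range.mpr (lt_of_le_of_lt hji hi),
        hdc j i hji hi hPi⟩
    simpa using Finset.card_le_card hsub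
  · intro hlt
    by_contra hPi
    have hsub : (Finset.range n).filter P ⊆ Finset.range i := by
      intro j hj
      rw [Finset.mem_filter, Finset.mem_range] at hj
      rw [Finset.mem_range]
      by_contra hji
      exact hPi (hdc i j (Nat.le_of_not_lt hji) hj.1 hj.2)
    have := Finset.card_le_card hsub
    simp at this
    omega

lemma intervalIntegrable_ite_le (r d : ℝ) :
    IntervalIntegrable (fun θ : ℝ => if θ ≤ r then d else 0) volume 0 1 := by
  rw [intervalIntegrable_iff]
  have h1 : MeasureTheory.IntegrableOn (fun _ : ℝ => d) (Set.uIoc 0 1) volume := by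
    apply (MeasureTheory.integrableOn_const_iff (by simp)).mpr
    right
    rw [Set.uIoc_of_le zero_le_one]
    simp [Real.volume_Ioc]
  have h2 := h1.indicator (measurableSet_Iic (a := r))
  have heq : (Set.Iic r).indicator (fun _ : ℝ => d) = fun θ : ℝ => if θ ≤ r then d else 0 := by
    funext θ
    simp [Set.indicator, Set.mem_Iic]
  rwa [heq] at h2

lemma integral_ite_le {r : ℝ} (d : ℝ) (h0 : 0 ≤ r) (h1 : r ≤ 1) :
    ∫ θ in (0:ℝ)..1, (if θ ≤ r then d else 0) = r * d := by
  have hind : (fun θ : ℝ => if θ ≤ r then d else 0)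
      = Set.indicator (Set.Iic r) (fun _ => d) := by
    funext θ
    simp [Set.indicator, Set.mem_Iic]
  rw [intervalIntegral.integral_of_le zero_le_one, hind,
    MeasureTheory.integral_indicator measurableSet_Iic,
    MeasureTheory.setIntegral_const,
    MeasureTheory.measureReal_restrict_apply measurableSet_Iic]
  have : Set.Iic r ∩ Set.Ioc 0 1 = Set.Ioc 0 r := by
    ext θ
    simp only [Set.mem_inter_iff, Set.mem_Iic, Set.mem_Ioc]
    constructor
    · rintro ⟨hθr, hθ0, _⟩; exact ⟨hθ0, hθr⟩
    · rintro ⟨hθ0, hθr⟩; exact ⟨hθr, hθ0, le_trans hθr h1⟩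
  rw [this, Real.volume_real_Ioc_of_le h0, smul_eq_mul]
  ring_nf

/-- if `S` is a random set with `Pr[e ∈ S] = c·p_e` for every `e`, then
`E[f(S)] ≥ c·f⁻(p)` for any nonnegative submodular `f`. -/
theorem stmt3 {V : Type*} [Fintype V] [DecidableEq V]
    (f : Finset V → ℝ)
    (hsub : ∀ A B : Finset V, A ⊆ B → ∀ e ∉ B,
      f (insert e A) - f A ≥ f (insert e B) - f B)
    (hnn : ∀ S : Finset V, 0 ≤ f S)
    (c : ℝ) (hc : c ∈ Set.Icc (0:ℝ) 1)
    (p : V → ℝ) (hp : ∀ e, p e ∈ Set.Icc (0:ℝ) 1)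
    (μ : Finset V → ℝ)
    (hμ0 : ∀ S : Finset V, 0 ≤ μ S)
    (hμ1 : ∑ S : Finset V, μ S = 1)
    (hmarg : ∀ e : V, ∑ S : Finset V, (if e ∈ S then μ S else 0) = c * p e) :
    ∑ S : Finset V, μ S * f S ≥ c * lovaszExt f p := by
  classical
  obtain ⟨hc0, hc1⟩ := hc
  rcases isEmpty_or_nonempty V with hV | hV
  · -- empty case
    have hS : ∀ S : Finset V, S = ∅ := fun S => Finset.eq_empty_of_isEmpty S
    have hfun : (fun θ : ℝ => f (Finset.univ.filter (fun e => θ ≤ p e)))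
        = fun _ : ℝ => f ∅ := by
      funext θ; congr 1; exact Finset.eq_empty_of_isEmpty _
    have hlov : lovaszExt f p = f ∅ := by
      unfold lovaszExt
      rw [hfun]
      simp
    rw [hlov]
    calc c * f ∅ ≤ f ∅ := by nlinarith [hnn (∅ : Finset V)]
      _ = (∑ S : Finset V, μ S) * f ∅ := by rw [hμ1, one_mul]
      _ = ∑ S : Finset V, μ S * f S := by
          rw [Finset.sum_mul]
          exact Finset.sum_congr rfl (fun S _ => by rw [hS S])
  · -- nonempty case
    inhabit V
    set r0 : V → V → Prop := fun a b => p b ≤ p a with hr0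
    haveI : IsTotal V r0 := ⟨fun a b => le_total (p b) (p a)⟩
    haveI : IsTrans V r0 := ⟨fun a b c hab hbc => le_trans hbc hab⟩
    obtain ⟨l, hnodup, hmeml, hsorted⟩ :
        ∃ l : List V, l.Nodup ∧ (∀ e : V, e ∈ l) ∧ l.Pairwise r0 := by
      refine ⟨List.insertionSort r0 Finset.univ.toList, ?_, ?_,
        List.pairwise_insertionSort r0 _⟩
      · exact (List.perm_insertionSort r0 _).nodup_iff.mpr (Finset.nodup_toList _)
      · intro e
        exact (List.perm_insertionSort r0 _).mem_iff.mpr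
          (Finset.mem_toList.mpr (Finset.mem_univ e))
    set n : ℕ := l.length with hn
    set v : ℕ → V := fun i => l.getD i default with hv
    have hvget : ∀ i, (h : i < n) → v i = l[i] := by
      intro i h
      simp only [hv, List.getD_eq_getElem?_getD, List.getElem?_eq_getElem h, Option.getD_some]
    set A : ℕ → Finset V := fun k => (l.take k).toFinset with hA
    set D : ℕ → ℝ := fun i => f (A (i+1)) - f (A i) with hD
    have hA0 : A 0 = ∅ := by simp [hA]
    have hAn : A n = Finset.univ := by
      ext e
      simp only [hA, hn, List.take_length, List.mem_toFinset, Finset.mem_univ, iff_true]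
      exact hmeml e
    have hAins : ∀ i, i < n → A (i+1) = insert (v i) (A i) := by
      intro i hi
      have htake : l.take (i+1) = l.take i ++ [l[i]] := by
        rw [List.take_succ, List.getElem?_eq_getElem hi]
        rfl
      simp only [hA, htake, List.toFinset_append, List.toFinset_cons, List.toFinset_nil,
        LawfulSingleton.insert_empty_eq]
      rw [hvget i hi, Finset.union_comm, ← Finset.insert_eq]
    have hmemtake : ∀ (i : ℕ) (hi : i < n) (k : ℕ), l[i] ∈ A k ↔ i < k := by
      intro i hi k
      simp only [hA, List.mem_toFinset]
      rw [List.mem_take_iff_getElem]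
      constructor
      · rintro ⟨j, hj, hji⟩
        have hjn : j < n := lt_of_lt_of_le hj (min_le_right _ _)
        have : j = i := (List.Nodup.getElem_inj_iff hnodup).mp hji
        omega
      · intro hik
        exact ⟨i, by omega, rfl⟩
    have hvnot : ∀ i, i < n → v i ∉ A i := by
      intro i hi
      rw [hvget i hi, hmemtake i hi i]
      omega
    -- telescoping
    have htel : ∀ k, f (A k) = f ∅ + ∑ i ∈ Finset.range k, D i := by
      intro k
      have := Finset.sum_range_sub (fun i => f (A i)) k
      simp only [hD]
      rw [this, hA0]
      ring
    -- chain inequality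
    have hchain : ∀ S : Finset V,
        f S ≥ f ∅ + ∑ i ∈ Finset.range n, (if v i ∈ S then D i else 0) := by
      intro S
      have key : ∀ k, k ≤ n →
          f (S ∩ A k) ≥ f ∅ + ∑ i ∈ Finset.range k, (if v i ∈ S then D i else 0) := by
        intro k
        induction k with
        | zero => intro _; simp [hA0, hnn]
        | succ k ih =>
          intro hk
          have hkn : k < n := hk
          have ihk := ih (le_of_lt hkn)
          rw [Finset.sum_range_succ]
          by_cases hvS : v k ∈ S
          · have hins : S ∩ A (k+1) = insert (v k) (S ∩ A k) := by
              rw [hAins k hkn, Finset.inter_insert_of_mem hvS]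
            have hsubm := hsub (S ∩ A k) (A k) Finset.inter_subset_right (v k) (hvnot k hkn)
            have : f (S ∩ A (k+1)) - f (S ∩ A k) ≥ D k := by
              rw [hins, hD]
              calc f (insert (v k) (S ∩ A k)) - f (S ∩ A k)
                  ≥ f (insert (v k) (A k)) - f (A k) := hsubm
                _ = f (A (k+1)) - f (A k) := by rw [hAins k hkn]
            simp only [hvS, if_true]
            linarith
          · have hins : S ∩ A (k+1) = S ∩ A k := by
              rw [hAins k hkn, Finset.inter_insert_of_notMem hvS]
            rw [hins]
            simp only [hvS, if_false, add_zero]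
            linarith
      have := key n le_rfl
      rwa [hAn, Finset.inter_univ] at this
    -- level set identity
    have hlevel : ∀ θ : ℝ, f (Finset.univ.filter (fun e => θ ≤ p e))
        = f ∅ + ∑ i ∈ Finset.range n, (if θ ≤ p (v i) then D i else 0) := by
      intro θ
      set P : ℕ → Prop := fun i => θ ≤ p (v i) with hP
      have hdc : ∀ i j, i ≤ j → j < n → P j → P i := by
        intro i j hij hj hPj
        rcases eq_or_lt_of_le hij with rfl | hlt
        · exact hPj
        · have hi : i < n := lt_trans hlt hj
          have := hsorted.rel_get_of_lt (a := ⟨i, hi⟩) (b := ⟨j, hj⟩) hlt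
          simp only [hr0] at this
          simp only [hP, hvget i hi, hvget j hj] at *
          calc θ ≤ p (l.get ⟨j, hj⟩) := hPj
            _ ≤ p (l.get ⟨i, hi⟩) := this
      set k : ℕ := ((Finset.range n).filter P).card with hk
      have hkn : k ≤ n := by
        rw [hk]
        calc ((Finset.range n).filter P).card ≤ (Finset.range n).card :=
          Finset.card_le_card (Finset.filter_subset _ _)
          _ = n := Finset.card_range n
      have hiff : ∀ i, i < n → (P i ↔ i < k) := fun i hi => downward_mem_iff_lt_card P hdc hi
      have hset : Finset.univ.filter (fun e => θ ≤ p e) = A k := by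
        ext e
        obtain ⟨i, hi, hie⟩ := List.mem_iff_getElem.mp (hmeml e)
        subst hie
        simp only [Finset.mem_filter, Finset.mem_univ, true_and]
        rw [hmemtake i hi k, ← hiff i hi]
        show (θ ≤ p l[i]) ↔ P i
        simp only [hP]
        rw [hvget i hi]
      have hsum : ∑ i ∈ Finset.range n, (if θ ≤ p (v i) then D i else 0)
          = ∑ i ∈ Finset.range k, D i := by
        rw [← Finset.sum_filter]
        apply Finset.sum_congr
        · ext i
          simp only [Finset.mem_filter, Finset.mem_range]
          constructor
          · rintro ⟨hi, hPi⟩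
            exact (hiff i hi).mp hPi
          · intro hik
            have hi : i < n := lt_of_lt_of_le hik hkn
            exact ⟨hi, (hiff i hi).mpr hik⟩
        · intros; rfl
      rw [hset, hsum, htel k]
    -- integral computation
    have hlov : lovaszExt f p = f ∅ + ∑ i ∈ Finset.range n, p (v i) * D i := by
      unfold lovaszExt
      have hcong : (fun θ : ℝ => f (Finset.univ.filter (fun e => θ ≤ p e)))
          = fun θ : ℝ => f ∅ + ∑ i ∈ Finset.range n, (if θ ≤ p (v i) then D i else 0) := by
        funext θ; exact hlevel θ
      rw [hcong]
      have hInt : ∀ i ∈ Finset.range n,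
          IntervalIntegrable (fun θ : ℝ => if θ ≤ p (v i) then D i else 0) volume 0 1 :=
        fun i _ => intervalIntegrable_ite_le (p (v i)) (D i)
      have h2 : IntervalIntegrable
          (fun θ : ℝ => ∑ i ∈ Finset.range n, (if θ ≤ p (v i) then D i else 0)) volume 0 1 := by
        have h3 := IntervalIntegrable.sum
          (f := fun i => fun θ : ℝ => if θ ≤ p (v i) then D i else 0) (Finset.range n) hInt
        have he : (∑ i ∈ Finset.range n, fun θ : ℝ => if θ ≤ p (v i) then D i else 0)
            = fun θ : ℝ => ∑ i ∈ Finset.range n, (if θ ≤ p (v i) then D i else 0) := by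
          funext θ
          simp [Finset.sum_apply]
        rwa [he] at h3
      rw [intervalIntegral.integral_add intervalIntegrable_const h2]
      rw [intervalIntegral.integral_const, intervalIntegral.integral_finset_sum hInt]
      congr 1
      · simp
      · apply Finset.sum_congr rfl
        intro i _
        exact integral_ite_le (D i) (hp (v i)).1 (hp (v i)).2
    -- expectation bound
    have hexp : ∑ S : Finset V, μ S * f S
        ≥ f ∅ + ∑ i ∈ Finset.range n, (c * p (v i)) * D i := by
      have step1 : ∑ S : Finset V, μ S * f S
          ≥ ∑ S : Finset V, μ S * (f ∅ + ∑ i ∈ Finset.range n, (if v i ∈ S then D i else 0)) := by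
        apply Finset.sum_le_sum
        intro S _
        exact mul_le_mul_of_nonneg_left (hchain S) (hμ0 S)
      have step2 : ∑ S : Finset V, μ S * (f ∅ + ∑ i ∈ Finset.range n, (if v i ∈ S then D i else 0))
          = f ∅ + ∑ i ∈ Finset.range n, (c * p (v i)) * D i := by
        have expand : ∀ S : Finset V,
            μ S * (f ∅ + ∑ i ∈ Finset.range n, (if v i ∈ S then D i else 0))
            = μ S * f ∅ + ∑ i ∈ Finset.range n, (if v i ∈ S then μ S else 0) * D i := by
          intro S
          rw [mul_add, Finset.mul_sum]
          congr 1
          apply Finset.sum_congr rfl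
          intro i _
          by_cases h : v i ∈ S <;> simp [h]
        calc ∑ S : Finset V, μ S * (f ∅ + ∑ i ∈ Finset.range n, (if v i ∈ S then D i else 0))
            = ∑ S : Finset V, (μ S * f ∅ + ∑ i ∈ Finset.range n, (if v i ∈ S then μ S else 0) * D i) :=
              Finset.sum_congr rfl (fun S _ => expand S)
          _ = (∑ S : Finset V, μ S * f ∅)
              + ∑ S : Finset V, ∑ i ∈ Finset.range n, (if v i ∈ S then μ S else 0) * D i := by
              rw [Finset.sum_add_distrib]
          _ = f ∅ + ∑ i ∈ Finset.range n, (c * p (v i)) * D i := by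
              congr 1
              · rw [← Finset.sum_mul, hμ1, one_mul]
              · rw [Finset.sum_comm]
                apply Finset.sum_congr rfl
                intro i _
                rw [← Finset.sum_mul, hmarg (v i)]
      linarith [step1, step2.symm.le, step2.le]
    -- conclude
    rw [hlov]
    have hfinal : c * (f ∅ + ∑ i ∈ Finset.range n, p (v i) * D i)
        = c * f ∅ + ∑ i ∈ Finset.range n, (c * p (v i)) * D i := by
      rw [mul_add, Finset.mul_sum]
      congr 1
      apply Finset.sum_congr rfl
      intro i _
      ring
    rw [hfinal]
    have : c * f ∅ ≤ f ∅ := by nlinarith [hnn (∅ : Finset V)]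
    linarith [hexp]
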